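/- Let Δ be a Jordan derivation of R = R_n(K,J) with n ≥ 4. Then for y ∈ J, the matrix Δ(y e_{1,n}) has nonzero entries only in row 1, column n, and positions (n−1,1), (n−1,2), (n,1), (n,2). -/

import Mathlib

open Matrix

/-- `R_n(K,J)`: the non-unital subring of `n × n` matrices over `K` whose entries on and
above the main diagonal lie in the two-sided ideal `J`. -/
def Rset (n : ℕ) (K : Type) [Ring K] (J : TwoSidedIdeal K) :
    NonUnitalSubring (Matrix (Fin n) (Fin n) K) where
  carrier := {M | ∀ i j : Fin n, i ≤ j → M i j ∈ J}
  zero_mem' := by intro i j _; simp [J.zero_mem]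
  add_mem' := by intro a b ha hb i j h; exact J.add_mem (ha i j h) (hb i j h)
  neg_mem' := by intro a ha i j h; exact J.neg_mem (ha i j h)
  mul_mem' := by
    intro a b ha hb i j h
    show (∑ k, a i k * b k j) ∈ J
    refine J.finsetSum_mem _ _ fun k _ => ?_
    rcases le_or_gt i k with hik | hik
    · exact J.mul_mem_right _ _ (ha i k hik)
    · exact J.mul_mem_left _ _ (hb k j (le_trans hik.le h))

lemma stdBasis_mem {n : ℕ} {K : Type} [Ring K] {J : TwoSidedIdeal K}
    {i j : Fin n} {y : K} (h : i ≤ j → y ∈ J) :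
    Matrix.single i j y ∈ Rset n K J := by
  intro a b hab
  rw [Matrix.single]
  by_cases hc : i = a ∧ j = b
  · obtain ⟨rfl, rfl⟩ := hc
    simpa using h hab
  · simp [Matrix.of_apply, if_neg hc, J.zero_mem]

lemma stdBasis_mem_lower {n : ℕ} {K : Type} [Ring K] {J : TwoSidedIdeal K}
    {i j : Fin n} (h : j < i) (y : K) :
    Matrix.single i j y ∈ Rset n K J :=
  stdBasis_mem fun hle => absurd hle (not_le.mpr h)



section JdAux
variable {R : Type} [NonUnitalRing R]
  (htf2 : ∀ a : R, a + a = 0 → a = 0)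
  (Δ : R → R)
  (hadd : ∀ a b : R, Δ (a + b) = Δ a + Δ b)
  (hjord : ∀ a b : R, Δ (a * b + b * a) = Δ a * b + b * Δ a + a * Δ b + Δ b * a)

include hadd

lemma jdAux_zero : Δ 0 = 0 := by
  have := hadd 0 0
  rw [add_zero] at this
  exact (left_eq_add.mp this)

include htf2 hjord

lemma jdAux_sq (a : R) : Δ (a * a) = Δ a * a + a * Δ a := by
  have h := hjord a a
  rw [hadd] at h
  have h2 : (Δ (a*a) - (Δ a * a + a * Δ a)) + (Δ (a*a) - (Δ a * a + a * Δ a)) = 0 := by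
    rw [sub_add_sub_comm, h]; abel
  exact sub_eq_zero.mp (htf2 _ h2)

lemma jdAux_triple (a b : R) :
    Δ (a * b * a) = Δ a * (b * a) + a * Δ b * a + (a * b) * Δ a := by
  set u := a * b + b * a with hu
  have h1 : Δ u = Δ a * b + b * Δ a + a * Δ b + Δ b * a := hjord a b
  have h2 : Δ (a * u + u * a) = Δ a * u + u * Δ a + a * Δ u + Δ u * a := hjord a u
  have h3 : Δ ((a*a) * b + b * (a*a)) =
      Δ (a*a) * b + b * Δ (a*a) + (a*a) * Δ b + Δ b * (a*a) := hjord (a*a) b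
  have e1 : a * u + u * a = ((a*a)*b + b*(a*a)) + ((a*b*a) + (a*b*a)) := by
    rw [hu]; noncomm_ring
  have e2 : Δ (a * u + u * a) =
      Δ ((a*a)*b + b*(a*a)) + (Δ (a*b*a) + Δ (a*b*a)) := by
    rw [e1, hadd, hadd, hadd]
  have key : Δ (a*b*a) + Δ (a*b*a) =
      (Δ a * (b * a) + a * Δ b * a + (a * b) * Δ a)
      + (Δ a * (b * a) + a * Δ b * a + (a * b) * Δ a) := by
    have h4 : Δ (a*b*a) + Δ (a*b*a) =
        (Δ a * u + u * Δ a + a * Δ u + Δ u * a) - Δ ((a*a)*b + b*(a*a)) := by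
      rw [← h2, e2]; abel
    rw [h4, h3, h1, jdAux_sq htf2 Δ hadd hjord a, hu]
    noncomm_ring
  have h5 : (Δ (a*b*a) - (Δ a * (b * a) + a * Δ b * a + (a * b) * Δ a))
      + (Δ (a*b*a) - (Δ a * (b * a) + a * Δ b * a + (a * b) * Δ a)) = 0 := by
    rw [sub_add_sub_comm, key]; abel
  exact sub_eq_zero.mp (htf2 _ h5)

end JdAux

/-- for `y ∈ J`, `Δ(y e_{1,n})` is supported on row `1`, column `n` and
positions `(n-1,1)`, `(n-1,2)`, `(n,1)`, `(n,2)` (one-based). -/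
theorem image_of_corner_unit (n : ℕ) (hn : 4 ≤ n) (K : Type) [Ring K]
    (htf : ∀ a : K, a + a = 0 → a = 0) (J : TwoSidedIdeal K)
    (Δ : ↥(Rset n K J) → ↥(Rset n K J))
    (hadd : ∀ a b : ↥(Rset n K J), Δ (a + b) = Δ a + Δ b)
    (hjord : ∀ a b : ↥(Rset n K J),
      Δ (a * b + b * a) = Δ a * b + b * Δ a + a * Δ b + Δ b * a)
    (y : K) (hy : y ∈ J) (s t : Fin n)
    (hs : (s : ℕ) ≠ 0) (ht : (t : ℕ) ≠ n - 1)
    (h1 : ¬ ((s : ℕ) = n - 2 ∧ (t : ℕ) = 0))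
    (h2 : ¬ ((s : ℕ) = n - 2 ∧ (t : ℕ) = 1))
    (h3 : ¬ ((s : ℕ) = n - 1 ∧ (t : ℕ) = 0))
    (h4 : ¬ ((s : ℕ) = n - 1 ∧ (t : ℕ) = 1)) :
    (↑(Δ ⟨Matrix.single ⟨0, by omega⟩ ⟨n - 1, by omega⟩ y,
        stdBasis_mem fun _ => hy⟩) : Matrix (Fin n) (Fin n) K) s t = 0 := by

  set i0 : Fin n := ⟨0, by omega⟩ with hi0
  set iN : Fin n := ⟨n - 1, by omega⟩ with hiNdef
  set x : ↥(Rset n K J) := ⟨Matrix.single i0 iN y,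
      stdBasis_mem fun _ => hy⟩ with hxdef
  show (↑(Δ x) : Matrix (Fin n) (Fin n) K) s t = 0
  have httf : ∀ a : ↥(Rset n K J), a + a = 0 → a = 0 := by
    intro a h
    have h' := congrArg Subtype.val h
    push_cast at h'
    apply Subtype.ext
    ext i j
    exact htf _ (by simpa using congrFun (congrFun h' i) j)
  have hzero : Δ 0 = 0 := jdAux_zero Δ hadd
  have htrip := jdAux_triple httf Δ hadd hjord
  set Dm : Matrix (Fin n) (Fin n) K := (↑(Δ x) : Matrix (Fin n) (Fin n) K) with hDmdef
  -- Mechanism A: entry-level relation from x∘e = 0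
  have hAent : ∀ (i j : Fin n) (hij : j < i), (i : ℕ) ≠ n - 1 → (j : ℕ) ≠ 0 →
      ∀ u v : Fin n, (u : ℕ) ≠ 0 → (v : ℕ) ≠ n - 1 →
      (Dm * Matrix.single i j (1:K)) u v
        + (Matrix.single i j (1:K) * Dm) u v = 0 := by
    intro i j hij hi hj u v hu hv
    set e : ↥(Rset n K J) := ⟨Matrix.single i j (1:K), stdBasis_mem_lower hij 1⟩
      with hedef
    have hne1 : iN ≠ i := Fin.ne_of_val_ne (Ne.symm hi)
    have hne2 : j ≠ i0 := Fin.ne_of_val_ne hj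
    have h0 : x * e + e * x = 0 := by
      apply Subtype.ext
      push_cast
      show Matrix.single i0 iN y * Matrix.single i j 1
        + Matrix.single i j 1 * Matrix.single i0 iN y = 0
      rw [Matrix.single_mul_single_of_ne _ _ _ _ hne1, Matrix.single_mul_single_of_ne _ _ _ _ hne2,
        add_zero]
    have hj1 := hjord x e
    rw [h0, hzero] at hj1
    have hm : (0 : Matrix (Fin n) (Fin n) K)
        = Dm * Matrix.single i j 1 + Matrix.single i j 1 * Dm
          + Matrix.single i0 iN y * (↑(Δ e) : Matrix (Fin n) (Fin n) K)
          + (↑(Δ e) : Matrix (Fin n) (Fin n) K) * Matrix.single i0 iN y := by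
      have hc := congrArg Subtype.val hj1
      push_cast at hc
      exact hc
    have hent := congrFun (congrFun hm u) v
    have hu0 : u ≠ i0 := Fin.ne_of_val_ne hu
    have hvN : v ≠ iN := Fin.ne_of_val_ne hv
    simp only [Matrix.add_apply, Matrix.zero_apply,
      Matrix.single_mul_apply_of_ne _ _ _ _ _ hu0,
      Matrix.mul_single_apply_of_ne _ _ _ _ _ hvN, add_zero] at hent
    exact hent.symm
  -- Corollary A1: rows 1..n-3 vanish off their own column (away from col n-1)
  have hA1 : ∀ (j v : Fin n), 1 ≤ (j : ℕ) → (j : ℕ) ≤ n - 3 → (v : ℕ) ≠ n - 1 →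
      v ≠ j → Dm j v = 0 := by
    intro j v hj1 hj3 hv hvj
    set i : Fin n := ⟨n - 2, by omega⟩ with hidef
    have hij : j < i := by rw [Fin.lt_def]; show (j : ℕ) < n - 2; omega
    have h := hAent i j hij (show (n - 2 : ℕ) ≠ n - 1 by omega) (by omega)
      i v (show (n - 2 : ℕ) ≠ 0 by omega) hv
    rw [Matrix.mul_single_apply_of_ne _ _ _ _ _ hvj,
      Matrix.single_mul_apply_same] at h
    simpa using h
  -- Corollary A2: columns 2..n-2 vanish off their own row (away from row 0)
  have hA2 : ∀ (i u : Fin n), 2 ≤ (i : ℕ) → (i : ℕ) ≤ n - 2 → (u : ℕ) ≠ 0 →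
      u ≠ i → Dm u i = 0 := by
    intro i u hi2 hin hu hui
    set j : Fin n := ⟨1, by omega⟩ with hjdef
    have hij : j < i := by rw [Fin.lt_def]; show 1 < (i : ℕ); omega
    have h := hAent i j hij (by omega) (show (1 : ℕ) ≠ 0 by omega)
      u j hu (show (1 : ℕ) ≠ n - 1 by omega)
    rw [Matrix.mul_single_apply_same,
      Matrix.single_mul_apply_of_ne _ _ _ _ _ hui] at h
    simpa using h
  -- Mechanism B: diagonal entries 1..n-2 vanish
  have hB : ∀ (i j l : Fin n), l < j → j < i → ((i : ℕ) ≠ n - 1 ∨ (l : ℕ) ≠ 0) →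
      Dm j j = 0 := by
    intro i j l hlj hji hcase
    have hlj' : (l : ℕ) < (j : ℕ) := hlj
    have hji' : (j : ℕ) < (i : ℕ) := hji
    have hiLt := i.isLt
    have hjne0 : (j : ℕ) ≠ 0 := by omega
    have hjneN : j ≠ iN := Fin.ne_of_val_ne (show (j : ℕ) ≠ n - 1 by omega)
    have hlnej : l ≠ j := Fin.ne_of_val_ne (by omega)
    have hinej : i ≠ j := Fin.ne_of_val_ne (by omega)
    set E1 : Matrix (Fin n) (Fin n) K := Matrix.single i j (1:K) with hE1
    set E2 : Matrix (Fin n) (Fin n) K := Matrix.single j l (1:K) with hE2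
    have hamem : E1 + E2 ∈ Rset n K J :=
      (Rset n K J).add_mem (stdBasis_mem_lower hji 1) (stdBasis_mem_lower hlj 1)
    set a : ↥(Rset n K J) := ⟨E1 + E2, hamem⟩ with hadef
    have hxa : Matrix.single i0 iN y * (E1 + E2)
        = if (i : ℕ) = n - 1 then Matrix.single i0 j y else 0 := by
      rw [Matrix.mul_add, hE2, Matrix.single_mul_single_of_ne _ _ _ _ (Ne.symm hjneN), add_zero,
        hE1]
      by_cases hi' : (i : ℕ) = n - 1
      · have hIN : iN = i := Fin.ext (show (iN : ℕ) = (i : ℕ) from hi'.symm)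
        rw [if_pos hi', ← hIN, Matrix.single_mul_single_same, mul_one]
      · rw [if_neg hi',
          Matrix.single_mul_single_of_ne _ _ _ _ (show iN ≠ i from Fin.ne_of_val_ne (Ne.symm hi'))]
    have hax : (E1 + E2) * Matrix.single i0 iN y
        = if (l : ℕ) = 0 then Matrix.single j iN y else 0 := by
      rw [Matrix.add_mul, hE1,
        Matrix.single_mul_single_of_ne _ _ _ _ (show j ≠ i0 from Fin.ne_of_val_ne hjne0),
        zero_add, hE2]
      by_cases hl' : (l : ℕ) = 0
      · have hL : l = i0 := Fin.ext (show (l : ℕ) = (i0 : ℕ) from hl')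
        rw [if_pos hl', hL, Matrix.single_mul_single_same, one_mul]
      · rw [if_neg hl',
          Matrix.single_mul_single_of_ne _ _ _ _ (show l ≠ i0 from Fin.ne_of_val_ne hl')]
    have h0 : a * x * a = 0 := by
      apply Subtype.ext
      push_cast
      show (E1 + E2) * Matrix.single i0 iN y * (E1 + E2) = 0
      rw [hax]
      by_cases hl' : (l : ℕ) = 0
      · have hiN' : (i : ℕ) ≠ n - 1 := by
          rcases hcase with hc | hc
          · exact hc
          · exact absurd hl' hc
        rw [if_pos hl', Matrix.mul_add, hE1,
          Matrix.single_mul_single_of_ne _ _ _ _ (show iN ≠ i from Fin.ne_of_val_ne (Ne.symm hiN')),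
          hE2, Matrix.single_mul_single_of_ne _ _ _ _ (Ne.symm hjneN), add_zero]
      · rw [if_neg hl', Matrix.zero_mul]
    have htr := htrip a x
    rw [h0, hzero] at htr
    have hm : (0 : Matrix (Fin n) (Fin n) K)
        = (↑(Δ a) : Matrix (Fin n) (Fin n) K)
            * (Matrix.single i0 iN y * (E1 + E2))
          + ((E1 + E2) * Dm) * (E1 + E2)
          + ((E1 + E2) * Matrix.single i0 iN y)
            * (↑(Δ a) : Matrix (Fin n) (Fin n) K) := by
      have hc := congrArg Subtype.val htr
      push_cast at hc
      exact hc
    rw [hxa, hax] at hm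
    have hent := congrFun (congrFun hm i) l
    have hT1 : ((↑(Δ a) : Matrix (Fin n) (Fin n) K)
        * (if (i : ℕ) = n - 1 then Matrix.single i0 j y else 0)) i l = 0 := by
      split_ifs
      · exact Matrix.mul_single_apply_of_ne _ _ _ _ _ hlnej _
      · simp
    have hT3 : ((if (l : ℕ) = 0 then Matrix.single j iN y else 0)
        * (↑(Δ a) : Matrix (Fin n) (Fin n) K)) i l = 0 := by
      split_ifs
      · exact Matrix.single_mul_apply_of_ne _ _ _ _ _ hinej _
      · simp
    rw [Matrix.add_apply, Matrix.add_apply, hT1, hT3, Matrix.zero_apply, zero_add,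
      add_zero] at hent
    have hT2 : (((E1 + E2) * Dm) * (E1 + E2)) i l = 1 * Dm j j * 1 := by
      rw [hE1, hE2]
      simp only [Matrix.add_mul, Matrix.mul_add, Matrix.add_apply]
      rw [Matrix.mul_single_apply_of_ne _ _ _ _ _ hlnej,
        Matrix.mul_single_apply_of_ne _ _ _ _ _ hlnej,
        Matrix.mul_single_apply_same, Matrix.mul_single_apply_same,
        Matrix.single_mul_apply_same,
        Matrix.single_mul_apply_of_ne _ _ _ _ _ hinej]
      simp
    rw [hT2] at hent
    have := hent.symm
    simpa using this
  -- final case analysis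
  rcases eq_or_ne (s : ℕ) (t : ℕ) with hst | hst
  · have hseq : s = t := Fin.ext hst
    rw [hseq]
    have ht1 : 1 ≤ (t : ℕ) := by omega
    have htn : (t : ℕ) ≤ n - 2 := by have := t.isLt; omega
    by_cases h' : (t : ℕ) ≤ n - 3
    · exact hB ⟨(t : ℕ) + 1, by omega⟩ t ⟨0, by omega⟩
        (show (0 : ℕ) < (t : ℕ) by omega) (show (t : ℕ) < (t : ℕ) + 1 by omega)
        (Or.inl (show (t : ℕ) + 1 ≠ n - 1 by omega))
    · exact hB iN t ⟨1, by omega⟩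
        (show (1 : ℕ) < (t : ℕ) by omega) (show (t : ℕ) < n - 1 by omega)
        (Or.inr (show (1 : ℕ) ≠ 0 by omega))
  · by_cases h2t : 2 ≤ (t : ℕ) ∧ (t : ℕ) ≤ n - 2
    · exact hA2 t s h2t.1 h2t.2 hs (Fin.ne_of_val_ne hst)
    · have htle : (t : ℕ) ≤ 1 := by have := t.isLt; omega
      have ht01 : (t : ℕ) = 0 ∨ (t : ℕ) = 1 := by omega
      have hsn2 : (s : ℕ) ≠ n - 2 := by
        rcases ht01 with h | h
        · exact fun hs' => h1 ⟨hs', h⟩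
        · exact fun hs' => h2 ⟨hs', h⟩
      have hsn1 : (s : ℕ) ≠ n - 1 := by
        rcases ht01 with h | h
        · exact fun hs' => h3 ⟨hs', h⟩
        · exact fun hs' => h4 ⟨hs', h⟩
      have hs3 : (s : ℕ) ≤ n - 3 := by have := s.isLt; omega
      exact hA1 s t (by omega) hs3 ht (Fin.ne_of_val_ne (Ne.symm hst))
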